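/- Let p be an odd prime, n \ge 1, S coprime to p, and a,b,c integers with gcd(a,b,c)=1, a \equiv p^\alpha A (mod p^n) with p \nmid A and 0 \le \alpha \le n (taking \alpha=n, A=1 if p^n | a), and p^\alpha | c. Then the double Gauss sum satisfies G(a,b,c;S;p^n) = G(SA;p^{n-\alpha}) \cdot G(SA\Delta;p^{n+\alpha}), where \Delta = 4ac-b^2. -/

import Mathlib

open Finset

noncomputable def Gsum (S : ℤ) (k : ℕ) : ℂ :=
  ∑ x ∈ Finset.range k,
    Complex.exp (2 * Real.pi * Complex.I * ((S * (x : ℤ) ^ 2 : ℤ) : ℂ) / (k : ℂ))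

noncomputable def Gsum2 (a b c S : ℤ) (k : ℕ) : ℂ :=
  ∑ x ∈ Finset.range k, ∑ y ∈ Finset.range k,
    Complex.exp (2 * Real.pi * Complex.I *
      ((S * (a * (x : ℤ) ^ 2 + b * (x : ℤ) * (y : ℤ) + c * (y : ℤ) ^ 2) : ℤ) : ℂ) / (k : ℂ))


noncomputable def psi (k : ℕ) (m : ℤ) : ℂ :=
  Complex.exp (2 * Real.pi * Complex.I * (m : ℂ) / (k : ℂ))

lemma psi_add (k : ℕ) (m m' : ℤ) : psi k (m + m') = psi k m * psi k m' := by
  rw [psi, psi, psi, ← Complex.exp_add]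
  congr 1
  push_cast
  ring

lemma psi_zero (k : ℕ) : psi k 0 = 1 := by simp [psi]

lemma psi_mul_self (k : ℕ) (hk : k ≠ 0) (t : ℤ) : psi k ((k : ℤ) * t) = 1 := by
  have hk' : (k : ℂ) ≠ 0 := Nat.cast_ne_zero.mpr hk
  rw [psi]
  have : 2 * (Real.pi : ℂ) * Complex.I * (((k : ℤ) * t : ℤ) : ℂ) / (k : ℂ)
      = t * (2 * Real.pi * Complex.I) := by
    push_cast
    field_simp
  rw [this, Complex.exp_int_mul_two_pi_mul_I]

lemma psi_congr (k : ℕ) (hk : k ≠ 0) {m m' : ℤ} (h : (k : ℤ) ∣ m - m') :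
    psi k m = psi k m' := by
  obtain ⟨t, ht⟩ := h
  have hm : m = m' + (k : ℤ) * t := by linarith
  rw [hm, psi_add, psi_mul_self k hk, mul_one]

lemma psi_pow (k : ℕ) (m : ℤ) (t : ℕ) : psi k (m * t) = (psi k m) ^ t := by
  rw [psi, psi, ← Complex.exp_nat_mul]
  congr 1
  push_cast
  ring

lemma psi_scale (k d : ℕ) (hk : k ≠ 0) (hd : d ≠ 0) (m : ℤ) :
    psi (k * d) (m * d) = psi k m := by
  have hk' : (k : ℂ) ≠ 0 := Nat.cast_ne_zero.mpr hk
  have hd' : (d : ℂ) ≠ 0 := Nat.cast_ne_zero.mpr hd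
  rw [psi, psi]
  congr 1
  push_cast
  field_simp

lemma psi_eq_one (K : ℕ) (hK : K ≠ 0) {c : ℤ} (h : psi K c = 1) : (K : ℤ) ∣ c := by
  rw [psi, Complex.exp_eq_one_iff] at h
  obtain ⟨t, ht⟩ := h
  have hK' : (K : ℂ) ≠ 0 := Nat.cast_ne_zero.mpr hK
  have h2 : (2 : ℂ) * Real.pi * Complex.I ≠ 0 := by
    simp [Real.pi_ne_zero, Complex.I_ne_zero]
  have : (c : ℂ) = (t : ℂ) * (K : ℂ) := by
    field_simp at ht
    apply mul_left_cancel₀ h2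
    push_cast at ht ⊢
    linear_combination (2 * (Real.pi : ℂ) * Complex.I) * ht
  have : (c : ℤ) = t * K := by exact_mod_cast this
  exact ⟨t, by linarith⟩

lemma psi_orth (K : ℕ) (hK : 0 < K) (c : ℤ) :
    ∑ t ∈ range K, psi K (c * t) = if (K : ℤ) ∣ c then (K : ℂ) else 0 := by
  split_ifs with h
  · have : ∀ t ∈ range K, psi K (c * t) = 1 := by
      intro t _
      have : (K : ℤ) ∣ c * t - 0 := by
        rw [sub_zero]; exact Dvd.dvd.mul_right h _
      rw [psi_congr K hK.ne' this, psi_zero]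
    rw [Finset.sum_congr rfl this]
    simp
  · have h1 : psi K c ≠ 1 := fun hc => h (psi_eq_one K hK.ne' hc)
    have : ∀ t ∈ range K, psi K (c * t) = (psi K c) ^ t := by
      intro t _; exact psi_pow K c t
    rw [Finset.sum_congr rfl this, geom_sum_eq h1]
    have : psi K c ^ K = 1 := by
      rw [← psi_pow, mul_comm, psi_mul_self K hK.ne']
    rw [this]
    simp
lemma sum_range_zmod (M : ℕ) [NeZero M] (G : ZMod M → ℂ) :
    ∑ x ∈ range M, G (x : ZMod M) = ∑ y : ZMod M, G y := by
  refine Finset.sum_nbij' (fun x => (x : ZMod M)) (fun y => y.val) ?_ ?_ ?_ ?_ ?_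
  · intro a _; exact Finset.mem_univ _
  · intro a _; exact Finset.mem_range.mpr (ZMod.val_lt a)
  · intro a ha; exact ZMod.val_natCast_of_lt (Finset.mem_range.mp ha)
  · intro a _; exact ZMod.natCast_rightInverse a
  · intro a _; rfl

lemma int_sub_val_dvd (M : ℕ) [NeZero M] (m : ℤ) :
    (M : ℤ) ∣ m - ((m : ZMod M).val : ℤ) := by
  rw [← ZMod.intCast_zmod_eq_zero_iff_dvd]
  push_cast
  rw [ZMod.natCast_val, ZMod.cast_id]
  ring

lemma isUnit_of_isCoprime_int {v : ℤ} {M : ℕ} (h : IsCoprime v (M : ℤ)) :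
    IsUnit ((v : ℤ) : ZMod M) := by
  obtain ⟨s, t, hst⟩ := h
  apply IsUnit.of_mul_eq_one ((s : ℤ) : ZMod M)
  have : ((s * v + t * M : ℤ) : ZMod M) = ((1 : ℤ) : ZMod M) := by rw [hst]
  push_cast at this
  simp only [ZMod.natCast_self, mul_zero, add_zero] at this
  rw [mul_comm]; exact this

lemma sum_zmod_affine (M : ℕ) [NeZero M] (G : ZMod M → ℂ) (v w : ZMod M)
    (hv : IsUnit v) : ∑ y : ZMod M, G (v * y + w) = ∑ y : ZMod M, G y := by
  obtain ⟨u, hu⟩ := hv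
  refine Finset.sum_nbij' (fun y => v * y + w) (fun y => (↑u⁻¹ : ZMod M) * (y - w))
    (fun a _ => Finset.mem_univ _) (fun a _ => Finset.mem_univ _) ?_ ?_ (fun a _ => rfl)
  · intro a _
    show (↑u⁻¹ : ZMod M) * (v * a + w - w) = a
    rw [← hu, add_sub_cancel_right, ← mul_assoc, Units.inv_mul, one_mul]
  · intro a _
    show v * ((↑u⁻¹ : ZMod M) * (a - w)) + w = a
    rw [← hu, ← mul_assoc, Units.mul_inv, one_mul, sub_add_cancel]

/-- Reindexing a quadratic exponential sum by an affine unit substitution. -/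
lemma psi_sq_reindex (M : ℕ) (hM : 0 < M) (T v w : ℤ) (hv : IsCoprime v (M : ℤ)) :
    ∑ x ∈ range M, psi M (T * (v * (x : ℤ) + w) ^ 2)
      = ∑ x ∈ range M, psi M (T * (x : ℤ) ^ 2) := by
  haveI : NeZero M := ⟨hM.ne'⟩
  set G : ZMod M → ℂ := fun y => psi M (T * ((y.val : ℤ)) ^ 2) with hG
  have key : ∀ m : ℤ, psi M (T * m ^ 2) = G ((m : ZMod M)) := by
    intro m
    apply psi_congr M hM.ne'
    set r : ℤ := ((m : ZMod M).val : ℤ) with hr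
    obtain ⟨t, ht⟩ := int_sub_val_dvd M m
    refine ⟨T * (m + r) * t, ?_⟩
    linear_combination (T * (m + r)) * ht
  have e1 : ∀ x : ℕ, psi M (T * (v * (x : ℤ) + w) ^ 2)
      = G ((v : ZMod M) * (x : ZMod M) + (w : ZMod M)) := by
    intro x
    rw [key (v * (x : ℤ) + w)]
    congr 1
    push_cast
    ring
  calc ∑ x ∈ range M, psi M (T * (v * (x : ℤ) + w) ^ 2)
      = ∑ x ∈ range M, G ((v : ZMod M) * (x : ZMod M) + (w : ZMod M)) :=
        Finset.sum_congr rfl fun x _ => e1 x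
    _ = ∑ y : ZMod M, G ((v : ZMod M) * y + (w : ZMod M)) :=
        sum_range_zmod M (fun y => G ((v : ZMod M) * y + (w : ZMod M)))
    _ = ∑ y : ZMod M, G y := sum_zmod_affine M G _ _ (isUnit_of_isCoprime_int hv)
    _ = ∑ x ∈ range M, G ((x : ZMod M)) := (sum_range_zmod M G).symm
    _ = ∑ x ∈ range M, psi M (T * (x : ℤ) ^ 2) := by
        refine Finset.sum_congr rfl fun x _ => ?_
        rw [key ((x : ℤ))]
        norm_cast
lemma sum_range_mul_split (M K : ℕ) (hM : 0 < M) (f : ℕ → ℂ) :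
    ∑ x ∈ range (M * K), f x = ∑ u ∈ range M, ∑ v ∈ range K, f (u + M * v) := by
  rw [← Finset.sum_product']
  refine Finset.sum_nbij' (fun x => (x % M, x / M)) (fun z => z.1 + M * z.2) ?_ ?_ ?_ ?_ ?_
  · intro x hx
    rw [Finset.mem_range] at hx
    rw [Finset.mem_product, Finset.mem_range, Finset.mem_range]
    exact ⟨Nat.mod_lt _ hM, (Nat.div_lt_iff_lt_mul hM).mpr (Nat.lt_of_lt_of_eq hx (mul_comm M K))⟩
  · intro z hz
    rw [Finset.mem_product, Finset.mem_range, Finset.mem_range] at hz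
    rw [Finset.mem_range]
    calc z.1 + M * z.2 < M + M * z.2 := by omega
      _ = M * (z.2 + 1) := by ring
      _ ≤ M * K := Nat.mul_le_mul_left M hz.2
  · intro x _
    exact Nat.mod_add_div x M
  · intro z hz
    rw [Finset.mem_product, Finset.mem_range, Finset.mem_range] at hz
    have h1 : (z.1 + M * z.2) % M = z.1 := by
      rw [Nat.add_mul_mod_self_left, Nat.mod_eq_of_lt hz.1]
    have h2 : (z.1 + M * z.2) / M = z.2 := by
      rw [Nat.add_mul_div_left _ _ hM, Nat.div_eq_of_lt hz.1, zero_add]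
    exact Prod.ext h1 h2
  · intro x _
    rw [Nat.mod_add_div x M]

lemma sum_collapse' (K M : ℕ) (hK : 0 < K) (g : ℕ → ℂ)
    (hg : ∀ y : ℕ, ¬ ((K : ℤ) ∣ (y : ℤ)) → g y = 0) :
    ∑ y ∈ range (K * M), g y = ∑ z ∈ range M, g (K * z) := by
  rw [sum_range_mul_split K M hK g]
  rw [Finset.sum_eq_single_of_mem 0 (Finset.mem_range.mpr hK)]
  · simp
  · intro b hb hb0
    rw [Finset.mem_range] at hb
    apply Finset.sum_eq_zero
    intro v _
    apply hg
    intro hdvd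
    push_cast at hdvd
    have : (K : ℤ) ∣ (b : ℤ) := by
      have h2 : (K : ℤ) ∣ (K : ℤ) * (v : ℤ) := Dvd.intro _ rfl
      simpa using dvd_sub hdvd h2
    have : (K : ℕ) ∣ b := Int.ofNat_dvd.mp this
    have := Nat.le_of_dvd (Nat.pos_of_ne_zero hb0) this
    omega

lemma prime_int (p : ℕ) (hp : p.Prime) : Prime ((p : ℕ) : ℤ) := Nat.prime_iff_prime_int.mp hp

lemma not_dvd_two (p : ℕ) (hp : p.Prime) (hodd : p ≠ 2) : ¬ ((p : ℤ) ∣ 2) := by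
  intro h
  have : p ∣ 2 := Int.ofNat_dvd.mp (by exact_mod_cast h)
  exact hodd ((Nat.prime_dvd_prime_iff_eq hp Nat.prime_two).mp this)

lemma gsum_step (p : ℕ) (hp : p.Prime) (hodd : p ≠ 2) (T : ℤ) (hT : ¬ (p : ℤ) ∣ T) (m : ℕ) :
    ∑ x ∈ range (p ^ (m + 2)), psi (p ^ (m + 2)) (T * (x : ℤ) ^ 2)
      = p * ∑ x ∈ range (p ^ m), psi (p ^ m) (T * (x : ℤ) ^ 2) := by
  have hp0 : 0 < p := hp.pos
  have hpm2 : (p : ℕ) ^ (m + 2) ≠ 0 := (pow_pos hp0 _).ne'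
  have hsplit : p ^ (m + 2) = p ^ (m + 1) * p := by ring
  have step1 : ∑ x ∈ range (p ^ (m + 2)), psi (p ^ (m + 2)) (T * (x : ℤ) ^ 2)
      = ∑ u ∈ range (p ^ (m + 1)), ∑ v ∈ range p,
          psi (p ^ (m + 2)) (T * ((u : ℤ) + (p : ℤ) ^ (m + 1) * (v : ℤ)) ^ 2) := by
    rw [hsplit, sum_range_mul_split _ _ (pow_pos hp0 _)]
    refine Finset.sum_congr rfl fun u _ => Finset.sum_congr rfl fun v _ => ?_
    rw [← hsplit]
    congr 1
  rw [step1]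
  -- termwise factorization
  have hterm : ∀ u v : ℕ,
      psi (p ^ (m + 2)) (T * ((u : ℤ) + (p : ℤ) ^ (m + 1) * (v : ℤ)) ^ 2)
        = psi (p ^ (m + 2)) (T * (u : ℤ) ^ 2) * psi p ((2 * T * (u : ℤ)) * (v : ℤ)) := by
    intro u v
    have hsc : psi p ((2 * T * (u : ℤ) * (v : ℤ))) =
        psi (p * p ^ (m + 1)) ((2 * T * (u : ℤ) * (v : ℤ)) * ((p : ℕ) ^ (m + 1) : ℤ)) := by
      rw [show ((p : ℕ) ^ (m + 1) : ℤ) = ((p ^ (m + 1) : ℕ) : ℤ) by push_cast; ring]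
      rw [psi_scale p (p ^ (m + 1)) hp0.ne' (pow_pos hp0 _).ne']
    have hpp : p * p ^ (m + 1) = p ^ (m + 2) := by ring
    rw [show psi p ((2 * T * (u : ℤ)) * (v : ℤ)) = psi p ((2 * T * (u : ℤ) * (v : ℤ))) by ring_nf,
        hsc, hpp, ← psi_add]
    apply psi_congr _ hpm2
    refine ⟨T * (v : ℤ) ^ 2 * (p:ℤ) ^ m, ?_⟩
    push_cast
    ring
  have horth : ∀ u : ℕ, ∑ v ∈ range p, psi p ((2 * T * (u : ℤ)) * (v : ℤ))
      = if (p : ℤ) ∣ (u : ℤ) then (p : ℂ) else 0 := by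
    intro u
    rw [psi_orth p hp0 (2 * T * (u : ℤ))]
    congr 1
    have hcop : IsCoprime ((p : ℤ)) (2 * T) := by
      rw [Prime.coprime_iff_not_dvd (prime_int p hp)]
      intro h
      rcases (Prime.dvd_mul (prime_int p hp)).mp h with h2 | hT'
      · exact not_dvd_two p hp hodd h2
      · exact hT hT'
    apply propext
    constructor
    · intro h
      exact hcop.dvd_of_dvd_mul_left (by rw [show (2 * T * (u:ℤ)) = (2*T) * (u:ℤ) by ring] at h; exact h)
    · intro h
      exact Dvd.dvd.mul_left h _
  have step2 : ∑ u ∈ range (p ^ (m + 1)), ∑ v ∈ range p,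
      psi (p ^ (m + 2)) (T * ((u : ℤ) + (p : ℤ) ^ (m + 1) * (v : ℤ)) ^ 2)
      = ∑ u ∈ range (p ^ (m + 1)),
          psi (p ^ (m + 2)) (T * (u : ℤ) ^ 2) * (if (p : ℤ) ∣ (u : ℤ) then (p : ℂ) else 0) := by
    refine Finset.sum_congr rfl fun u _ => ?_
    rw [show (∑ v ∈ range p, psi (p ^ (m + 2)) (T * ((u : ℤ) + (p : ℤ) ^ (m + 1) * (v : ℤ)) ^ 2))
        = ∑ v ∈ range p, psi (p ^ (m + 2)) (T * (u : ℤ) ^ 2) * psi p ((2 * T * (u : ℤ)) * (v : ℤ))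
      from Finset.sum_congr rfl fun v _ => hterm u v]
    rw [← Finset.mul_sum, horth u]
  rw [step2]
  have hcollapse : ∑ u ∈ range (p ^ (m + 1)),
      psi (p ^ (m + 2)) (T * (u : ℤ) ^ 2) * (if (p : ℤ) ∣ (u : ℤ) then (p : ℂ) else 0)
      = ∑ z ∈ range (p ^ m),
          psi (p ^ (m + 2)) (T * ((p * z : ℕ) : ℤ) ^ 2) * (if (p : ℤ) ∣ ((p * z : ℕ) : ℤ) then (p : ℂ) else 0) := by
    rw [show p ^ (m + 1) = p * p ^ m by ring]
    exact sum_collapse' p (p ^ m) hp0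
      (fun u => psi (p ^ (m + 2)) (T * (u : ℤ) ^ 2) * (if (p : ℤ) ∣ (u : ℤ) then (p : ℂ) else 0))
      (fun y hy => by
        show psi (p ^ (m + 2)) (T * (y : ℤ) ^ 2) * _ = 0
        rw [if_neg hy, mul_zero])
  rw [hcollapse]
  rw [Finset.mul_sum]
  refine Finset.sum_congr rfl fun z _ => ?_
  have hdvd : (p : ℤ) ∣ ((p * z : ℕ) : ℤ) := by push_cast; exact Dvd.intro _ rfl
  rw [if_pos hdvd]
  have hsc2 : psi (p ^ (m + 2)) (T * ((p * z : ℕ) : ℤ) ^ 2) = psi (p ^ m) (T * (z : ℤ) ^ 2) := by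
    rw [show T * ((p * z : ℕ) : ℤ) ^ 2 = (T * (z : ℤ) ^ 2) * ((p ^ 2 : ℕ) : ℤ) by push_cast; ring]
    rw [show p ^ (m + 2) = p ^ m * p ^ 2 by ring]
    exact psi_scale (p ^ m) (p ^ 2) (pow_pos hp0 _).ne' (pow_pos hp0 _).ne' _
  rw [hsc2]
  ring

lemma gsum_iter (p : ℕ) (hp : p.Prime) (hodd : p ≠ 2) (T : ℤ) (hT : ¬ (p : ℤ) ∣ T)
    (m : ℕ) (j : ℕ) :
    ∑ x ∈ range (p ^ (m + 2 * j)), psi (p ^ (m + 2 * j)) (T * (x : ℤ) ^ 2)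
      = (p : ℂ) ^ j * ∑ x ∈ range (p ^ m), psi (p ^ m) (T * (x : ℤ) ^ 2) := by
  induction j with
  | zero => simp
  | succ j ih =>
      have h1 : m + 2 * (j + 1) = (m + 2 * j) + 2 := by ring
      rw [h1, gsum_step p hp hodd T hT (m + 2 * j), ih]
      ring
lemma sq_scale (M : ℕ) (hM : 0 < M) (T T' v : ℤ) (hv : IsCoprime v (M : ℤ))
    (h : (M : ℤ) ∣ T * v ^ 2 - T') :
    ∑ x ∈ range M, psi M (T' * (x : ℤ) ^ 2) = ∑ x ∈ range M, psi M (T * (x : ℤ) ^ 2) := by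
  calc ∑ x ∈ range M, psi M (T' * (x : ℤ) ^ 2)
      = ∑ x ∈ range M, psi M (T * (v * (x : ℤ) + 0) ^ 2) := by
        refine Finset.sum_congr rfl fun x _ => ?_
        apply psi_congr M hM.ne'
        obtain ⟨s, hs⟩ := h
        exact ⟨-(x : ℤ) ^ 2 * s, by linear_combination (-(x : ℤ) ^ 2) * hs⟩
    _ = ∑ x ∈ range M, psi M (T * (x : ℤ) ^ 2) := psi_sq_reindex M hM T v 0 hv

lemma Gsum_eq (T : ℤ) (k : ℕ) : Gsum T k = ∑ x ∈ range k, psi k (T * (x : ℤ) ^ 2) := rfl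

lemma Gsum2_eq (a b c S : ℤ) (k : ℕ) : Gsum2 a b c S k
    = ∑ x ∈ range k, ∑ y ∈ range k,
        psi k (S * (a * (x : ℤ) ^ 2 + b * (x : ℤ) * (y : ℤ) + c * (y : ℤ) ^ 2)) := rfl

set_option maxHeartbeats 1000000 in
theorem stmt_14 (p : ℕ) (hp : p.Prime) (hodd : p ≠ 2) (n : ℕ) (hn : 0 < n)
    (S a b c A : ℤ) (α : ℕ) (hα : α ≤ n)
    (hS : IsCoprime S (p : ℤ)) (habc : Int.gcd (Int.gcd a b) c = 1)
    (hA : ¬ (p : ℤ) ∣ A) (ha : a ≡ (p : ℤ) ^ α * A [ZMOD ((p : ℤ) ^ n)])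
    (hAone : α = n → A = 1)
    (hc : (p : ℤ) ^ α ∣ c) :
    Gsum2 a b c S (p ^ n) =
      Gsum (S * A) (p ^ (n - α)) * Gsum (S * A * (4 * a * c - b ^ 2)) (p ^ (n + α)) := by
  have hp0 : 0 < p := hp.pos
  have hpZ : Prime ((p : ℕ) : ℤ) := Nat.prime_iff_prime_int.mp hp
  set m := n - α with hmdef
  have hm : α + m = n := Nat.add_sub_cancel' hα
  have hpm : 0 < p ^ m := pow_pos hp0 m
  have hpα : 0 < p ^ α := pow_pos hp0 α
  have hpn : 0 < p ^ n := pow_pos hp0 n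
  have hpnα : 0 < p ^ (n + α) := pow_pos hp0 _
  have hnat : p ^ α * p ^ m = p ^ n := by rw [← pow_add, hm]
  have hnat' : p ^ m * p ^ α = p ^ n := by rw [mul_comm]; exact hnat
  have hpow : (p : ℤ) ^ α * (p : ℤ) ^ m = (p : ℤ) ^ n := by rw [← pow_add, hm]
  have hpow2 : (p : ℤ) ^ α * (p : ℤ) ^ n = (p : ℤ) ^ (n + α) := by
    rw [← pow_add]; congr 1; omega
  -- decompose a and c
  obtain ⟨C, rfl⟩ := hc
  obtain ⟨t, hat⟩ := Int.ModEq.dvd ha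
  have haP : a = (p : ℤ) ^ α * (A - (p : ℤ) ^ m * t) := by
    linear_combination -hat + t * hpow
  -- coprimality facts
  have hpS : ¬ ((p : ℤ) ∣ S) := by
    intro h
    exact hpZ.not_unit (hS.isUnit_of_dvd' h dvd_rfl)
  have hpb : 0 < α → ¬ ((p : ℤ) ∣ b) := by
    intro hα0 hdvd
    have hpa : (p : ℤ) ∣ a := by
      rw [haP]
      exact Dvd.dvd.mul_right (dvd_pow_self _ hα0.ne') _
    have hpc : (p : ℤ) ∣ (p : ℤ) ^ α * C :=
      Dvd.dvd.mul_right (dvd_pow_self _ hα0.ne') _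
    have h1 : (p : ℤ) ∣ ((Int.gcd a b : ℕ) : ℤ) := Int.dvd_coe_gcd hpa hdvd
    have h2 : (p : ℤ) ∣ ((Int.gcd ((Int.gcd a b : ℕ) : ℤ) ((p : ℤ) ^ α * C) : ℕ) : ℤ) :=
      Int.dvd_coe_gcd h1 hpc
    rw [habc] at h2
    exact hpZ.not_unit (isUnit_of_dvd_one (by exact_mod_cast h2))
  have hcopSb : IsCoprime ((p : ℤ) ^ α) (S * b) := by
    rcases Nat.eq_zero_or_pos α with h0 | h0
    · rw [h0, pow_zero]; exact isCoprime_one_left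
    · apply IsCoprime.pow_left
      rw [Prime.coprime_iff_not_dvd hpZ]
      intro h
      rcases hpZ.dvd_mul.mp h with h | h
      · exact hpS h
      · exact hpb h0 h
  have hp2A : ¬ ((p : ℤ) ∣ 2 * A) := by
    intro h
    rcases hpZ.dvd_mul.mp h with h | h
    · exact not_dvd_two p hp hodd h
    · exact hA h
  have hcop2A : IsCoprime (2 * A) (((p ^ m : ℕ) : ℤ)) := by
    push_cast
    exact (((Prime.coprime_iff_not_dvd hpZ).mpr hp2A).symm).pow_right
  have hp4A : ¬ ((p : ℤ) ∣ 4 * A) := by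
    intro h
    rw [show (4 : ℤ) * A = 2 * (2 * A) by ring] at h
    rcases hpZ.dvd_mul.mp h with h | h
    · exact not_dvd_two p hp hodd h
    · exact hp2A h
  obtain ⟨A', t', hA't⟩ : ∃ A' t' : ℤ, 4 * A * A' - 1 = (p : ℤ) ^ m * t' := by
    have h4 : IsCoprime (4 * A) ((p : ℤ) ^ m) :=
      (((Prime.coprime_iff_not_dvd hpZ).mpr hp4A).symm).pow_right
    obtain ⟨u, v, huv⟩ := h4
    exact ⟨u, -v, by linear_combination huv⟩

  -- abbreviations
  set Δ₀ : ℤ := 4 * A * ((p : ℤ) ^ α * (p : ℤ) ^ α * C) - b ^ 2 with hΔ₀def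
  -- key termwise identities
  have key2 : ∀ (u v y : ℕ),
      psi (p ^ n) (S * (a * ((u : ℤ) + (p : ℤ) ^ m * (v : ℤ)) ^ 2
          + b * ((u : ℤ) + (p : ℤ) ^ m * (v : ℤ)) * (y : ℤ) + ((p : ℤ) ^ α * C) * (y : ℤ) ^ 2))
        = psi (p ^ n) (S * (a * (u : ℤ) ^ 2 + b * (u : ℤ) * (y : ℤ)
            + ((p : ℤ) ^ α * C) * (y : ℤ) ^ 2)) * psi (p ^ α) ((S * b * (y : ℤ)) * (v : ℤ)) := by
    intro u v y
    have h1 : psi (p ^ α) ((S * b * (y : ℤ)) * (v : ℤ))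
        = psi (p ^ n) (((S * b * (y : ℤ)) * (v : ℤ)) * ((p ^ m : ℕ) : ℤ)) := by
      conv_rhs => rw [← hnat]
      rw [psi_scale (p ^ α) (p ^ m) hpα.ne' hpm.ne']
    rw [h1, ← psi_add]
    apply psi_congr _ hpn.ne'
    refine ⟨S * (A - (p : ℤ) ^ m * t) * (2 * (u : ℤ) * (v : ℤ) + (p : ℤ) ^ m * (v : ℤ) ^ 2), ?_⟩
    push_cast
    linear_combination (S * (2 * (u : ℤ) * (v : ℤ) * (p : ℤ) ^ m
        + (p : ℤ) ^ m * (p : ℤ) ^ m * (v : ℤ) ^ 2)) * haP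
      + (S * (A - (p : ℤ) ^ m * t) * (2 * (u : ℤ) * (v : ℤ) + (p : ℤ) ^ m * (v : ℤ) ^ 2)) * hpow
  have orth2 : ∀ y : ℕ, (∑ v ∈ range (p ^ α), psi (p ^ α) ((S * b * (y : ℤ)) * (v : ℤ)))
      = if ((p ^ α : ℕ) : ℤ) ∣ ((y : ℕ) : ℤ) then ((p ^ α : ℕ) : ℂ) else 0 := by
    intro y
    rw [psi_orth (p ^ α) hpα (S * b * (y : ℤ))]
    have hcop' : IsCoprime (((p ^ α : ℕ)) : ℤ) (S * b) := by push_cast; exact hcopSb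
    congr 1
    apply propext
    constructor
    · intro h
      exact hcop'.dvd_of_dvd_mul_left h
    · intro h
      exact h.mul_left _
  have key3 : ∀ (z u : ℕ),
      psi (p ^ n) (S * (a * (u : ℤ) ^ 2 + b * (u : ℤ) * ((p ^ α * z : ℕ) : ℤ)
          + ((p : ℤ) ^ α * C) * ((p ^ α * z : ℕ) : ℤ) ^ 2))
        = psi (p ^ m) (S * (A * (u : ℤ) ^ 2 + b * (u : ℤ) * (z : ℤ)
            + ((p : ℤ) ^ α * (p : ℤ) ^ α * C) * (z : ℤ) ^ 2)) := by
    intro z u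
    have h1 : psi (p ^ m) (S * (A * (u : ℤ) ^ 2 + b * (u : ℤ) * (z : ℤ)
          + ((p : ℤ) ^ α * (p : ℤ) ^ α * C) * (z : ℤ) ^ 2))
        = psi (p ^ n) ((S * (A * (u : ℤ) ^ 2 + b * (u : ℤ) * (z : ℤ)
            + ((p : ℤ) ^ α * (p : ℤ) ^ α * C) * (z : ℤ) ^ 2)) * ((p ^ α : ℕ) : ℤ)) := by
      conv_rhs => rw [← hnat']
      rw [psi_scale (p ^ m) (p ^ α) hpm.ne' hpα.ne']
    rw [h1]
    apply psi_congr _ hpn.ne'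
    refine ⟨-(S * t * (u : ℤ) ^ 2), ?_⟩
    push_cast
    linear_combination (S * (u : ℤ) ^ 2) * haP + (-(S * t * (u : ℤ) ^ 2)) * hpow
  have key4 : ∀ (z u : ℕ),
      psi (p ^ m) (S * (A * (u : ℤ) ^ 2 + b * (u : ℤ) * (z : ℤ)
          + ((p : ℤ) ^ α * (p : ℤ) ^ α * C) * (z : ℤ) ^ 2))
        = psi (p ^ m) ((S * A') * (2 * A * (u : ℤ) + b * (z : ℤ)) ^ 2)
          * psi (p ^ m) ((S * A' * Δ₀) * (z : ℤ) ^ 2) := by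
    intro z u
    rw [← psi_add]
    apply psi_congr _ hpm.ne'
    refine ⟨-(S * (A * (u : ℤ) ^ 2 + b * (u : ℤ) * (z : ℤ)
        + ((p : ℤ) ^ α * (p : ℤ) ^ α * C) * (z : ℤ) ^ 2) * t'), ?_⟩
    rw [hΔ₀def]
    push_cast
    linear_combination (-(S * (A * (u : ℤ) ^ 2 + b * (u : ℤ) * (z : ℤ)
        + ((p : ℤ) ^ α * (p : ℤ) ^ α * C) * (z : ℤ) ^ 2))) * hA't
  -- square-scaling identities
  have sq1 : ∑ u ∈ range (p ^ m), psi (p ^ m) ((S * A') * (u : ℤ) ^ 2)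
      = ∑ u ∈ range (p ^ m), psi (p ^ m) ((S * A) * (u : ℤ) ^ 2) := by
    refine (sq_scale (p ^ m) hpm (S * A') (S * A) (2 * A) hcop2A ?_).symm
    refine ⟨S * A * t', ?_⟩
    push_cast
    linear_combination (S * A) * hA't
  have sq2 : ∑ z ∈ range (p ^ m), psi (p ^ m) ((S * A' * Δ₀) * (z : ℤ) ^ 2)
      = ∑ z ∈ range (p ^ m), psi (p ^ m) ((S * A * Δ₀) * (z : ℤ) ^ 2) := by
    refine (sq_scale (p ^ m) hpm (S * A' * Δ₀) (S * A * Δ₀) (2 * A) hcop2A ?_).symm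
    refine ⟨S * A * Δ₀ * t', ?_⟩
    push_cast
    linear_combination (S * A * Δ₀) * hA't
  have reidx : ∀ z : ℕ, ∑ u ∈ range (p ^ m), psi (p ^ m) ((S * A') * (2 * A * (u : ℤ) + b * (z : ℤ)) ^ 2)
      = ∑ u ∈ range (p ^ m), psi (p ^ m) ((S * A') * (u : ℤ) ^ 2) := by
    intro z
    exact psi_sq_reindex (p ^ m) hpm (S * A') (2 * A) (b * (z : ℤ)) (by exact_mod_cast hcop2A)
  -- main chain
  have main : Gsum2 a b ((p : ℤ) ^ α * C) S (p ^ n)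
      = (∑ u ∈ range (p ^ m), psi (p ^ m) ((S * A) * (u : ℤ) ^ 2))
        * (((p ^ α : ℕ) : ℂ) * ∑ z ∈ range (p ^ m), psi (p ^ m) ((S * A * Δ₀) * (z : ℤ) ^ 2)) := by
    calc Gsum2 a b ((p : ℤ) ^ α * C) S (p ^ n)
        = ∑ x ∈ range (p ^ n), ∑ y ∈ range (p ^ n),
            psi (p ^ n) (S * (a * (x : ℤ) ^ 2 + b * (x : ℤ) * (y : ℤ)
              + ((p : ℤ) ^ α * C) * (y : ℤ) ^ 2)) := Gsum2_eq _ _ _ _ _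
      _ = ∑ u ∈ range (p ^ m), ∑ v ∈ range (p ^ α), ∑ y ∈ range (p ^ n),
            psi (p ^ n) (S * (a * ((u : ℤ) + (p : ℤ) ^ m * (v : ℤ)) ^ 2
              + b * ((u : ℤ) + (p : ℤ) ^ m * (v : ℤ)) * (y : ℤ)
              + ((p : ℤ) ^ α * C) * (y : ℤ) ^ 2)) := by
          conv_lhs => rw [show p ^ n = p ^ m * p ^ α from hnat'.symm]
          rw [sum_range_mul_split (p ^ m) (p ^ α) hpm]
          rw [hnat']
          refine Finset.sum_congr rfl fun u _ => Finset.sum_congr rfl fun v _ =>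
            Finset.sum_congr rfl fun y _ => ?_
          congr 1
      _ = ∑ y ∈ range (p ^ n), ∑ u ∈ range (p ^ m), ∑ v ∈ range (p ^ α),
            psi (p ^ n) (S * (a * ((u : ℤ) + (p : ℤ) ^ m * (v : ℤ)) ^ 2
              + b * ((u : ℤ) + (p : ℤ) ^ m * (v : ℤ)) * (y : ℤ)
              + ((p : ℤ) ^ α * C) * (y : ℤ) ^ 2)) := by
          exact (Finset.sum_congr rfl fun u _ => Finset.sum_comm).trans Finset.sum_comm
      _ = ∑ y ∈ range (p ^ n),
            (∑ u ∈ range (p ^ m), psi (p ^ n) (S * (a * (u : ℤ) ^ 2 + b * (u : ℤ) * (y : ℤ)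
              + ((p : ℤ) ^ α * C) * (y : ℤ) ^ 2)))
            * (if ((p ^ α : ℕ) : ℤ) ∣ ((y : ℕ) : ℤ) then ((p ^ α : ℕ) : ℂ) else 0) := by
          refine Finset.sum_congr rfl fun y _ => ?_
          rw [Finset.sum_mul]
          refine Finset.sum_congr rfl fun u _ => ?_
          rw [show (∑ v ∈ range (p ^ α),
              psi (p ^ n) (S * (a * ((u : ℤ) + (p : ℤ) ^ m * (v : ℤ)) ^ 2
                + b * ((u : ℤ) + (p : ℤ) ^ m * (v : ℤ)) * (y : ℤ)
                + ((p : ℤ) ^ α * C) * (y : ℤ) ^ 2)))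
              = ∑ v ∈ range (p ^ α),
                psi (p ^ n) (S * (a * (u : ℤ) ^ 2 + b * (u : ℤ) * (y : ℤ)
                  + ((p : ℤ) ^ α * C) * (y : ℤ) ^ 2)) * psi (p ^ α) ((S * b * (y : ℤ)) * (v : ℤ))
            from Finset.sum_congr rfl fun v _ => key2 u v y]
          rw [← Finset.mul_sum, orth2 y]
      _ = ∑ z ∈ range (p ^ m),
            (∑ u ∈ range (p ^ m), psi (p ^ n) (S * (a * (u : ℤ) ^ 2
              + b * (u : ℤ) * ((p ^ α * z : ℕ) : ℤ)
              + ((p : ℤ) ^ α * C) * ((p ^ α * z : ℕ) : ℤ) ^ 2)))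
            * (((p ^ α : ℕ)) : ℂ) := by
          have hcol := sum_collapse' (p ^ α) (p ^ m) hpα
            (fun y => (∑ u ∈ range (p ^ m), psi (p ^ n) (S * (a * (u : ℤ) ^ 2
                + b * (u : ℤ) * ((y : ℕ) : ℤ) + ((p : ℤ) ^ α * C) * ((y : ℕ) : ℤ) ^ 2)))
              * (if ((p ^ α : ℕ) : ℤ) ∣ ((y : ℕ) : ℤ) then ((p ^ α : ℕ) : ℂ) else 0))
            (fun y hy => by
              rw [if_neg hy, mul_zero])
          rw [hnat] at hcol
          rw [hcol]
          refine Finset.sum_congr rfl fun z _ => ?_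
          rw [if_pos (show ((p ^ α : ℕ) : ℤ) ∣ ((p ^ α * z : ℕ) : ℤ) from ⟨(z : ℤ), by push_cast; ring⟩)]
      _ = ∑ z ∈ range (p ^ m),
            (∑ u ∈ range (p ^ m), psi (p ^ m) ((S * A') * (2 * A * (u : ℤ) + b * (z : ℤ)) ^ 2)
              * psi (p ^ m) ((S * A' * Δ₀) * (z : ℤ) ^ 2))
            * (((p ^ α : ℕ)) : ℂ) := by
          refine Finset.sum_congr rfl fun z _ => ?_
          congr 1
          refine Finset.sum_congr rfl fun u _ => ?_
          rw [key3 z u, key4 z u]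
      _ = ∑ z ∈ range (p ^ m),
            (∑ u ∈ range (p ^ m), psi (p ^ m) ((S * A') * (u : ℤ) ^ 2))
              * psi (p ^ m) ((S * A' * Δ₀) * (z : ℤ) ^ 2) * (((p ^ α : ℕ)) : ℂ) := by
          refine Finset.sum_congr rfl fun z _ => ?_
          rw [← Finset.sum_mul, reidx z]
      _ = (∑ u ∈ range (p ^ m), psi (p ^ m) ((S * A') * (u : ℤ) ^ 2))
            * (((p ^ α : ℕ) : ℂ) * ∑ z ∈ range (p ^ m), psi (p ^ m) ((S * A' * Δ₀) * (z : ℤ) ^ 2)) := by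
          rw [Finset.mul_sum, Finset.mul_sum]
          refine Finset.sum_congr rfl fun z _ => ?_
          ring
      _ = (∑ u ∈ range (p ^ m), psi (p ^ m) ((S * A) * (u : ℤ) ^ 2))
            * (((p ^ α : ℕ) : ℂ) * ∑ z ∈ range (p ^ m), psi (p ^ m) ((S * A * Δ₀) * (z : ℤ) ^ 2)) := by
          rw [sq1, sq2]
  -- the second Gauss factor
  have final2 : Gsum (S * A * (4 * a * ((p : ℤ) ^ α * C) - b ^ 2)) (p ^ (n + α))
      = ((p ^ α : ℕ) : ℂ) * ∑ z ∈ range (p ^ m), psi (p ^ m) ((S * A * Δ₀) * (z : ℤ) ^ 2) := by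
    have hstep1 : Gsum (S * A * (4 * a * ((p : ℤ) ^ α * C) - b ^ 2)) (p ^ (n + α))
        = ∑ x ∈ range (p ^ (n + α)), psi (p ^ (n + α)) ((S * A * Δ₀) * (x : ℤ) ^ 2) := by
      rw [Gsum_eq]
      refine Finset.sum_congr rfl fun x _ => ?_
      apply psi_congr _ hpnα.ne'
      refine ⟨-(4 * S * A * C * t * (x : ℤ) ^ 2), ?_⟩
      rw [hΔ₀def]
      push_cast
      linear_combination (4 * S * A * C * (x : ℤ) ^ 2 * (p : ℤ) ^ α) * haP
        + (-(4 * S * A * C * t * (x : ℤ) ^ 2 * (p : ℤ) ^ α)) * hpow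
        + (4 * S * A * C * t * (x : ℤ) ^ 2) * hpow2
    rw [hstep1]
    rcases Nat.eq_zero_or_pos α with hα0 | hαpos
    · rw [hα0, show n + 0 = m by omega]
      norm_num
    · have hT : ¬ ((p : ℤ) ∣ S * A * Δ₀) := by
        intro h
        rcases hpZ.dvd_mul.mp h with h1 | h1
        · rcases hpZ.dvd_mul.mp h1 with h2 | h2
          · exact hpS h2
          · exact hA h2
        · have hb2 : (p : ℤ) ∣ b ^ 2 := by
            have hd : (p : ℤ) ∣ 4 * A * ((p : ℤ) ^ α * (p : ℤ) ^ α * C) :=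
              Dvd.dvd.mul_left
                (((dvd_pow_self ((p : ℕ) : ℤ) hαpos.ne').mul_right ((p : ℤ) ^ α)).mul_right C) _
            rw [hΔ₀def] at h1
            have := dvd_sub hd h1
            simpa using this
          exact hpb hαpos (hpZ.dvd_of_dvd_pow hb2)
      rw [show n + α = m + 2 * α by omega]
      rw [gsum_iter p hp hodd (S * A * Δ₀) hT m α]
      congr 1
      push_cast
      ring
  rw [Gsum_eq (S * A) (p ^ m), main, final2]
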